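/- arXiv:1812.03257 — 3 statements merged into one kernel-verified Lean document; each statement's English description precedes it below -/
import Mathlib

section
/- With m as in the model Riemann–Hilbert solution m(z) = (1/2)[[ν+ν⁻¹, (2/(i·conj(q₋)))(ν−ν⁻¹)],[(i·conj(q₋)/2)(ν−ν⁻¹), ν+ν⁻¹]] where ν(z) = ((z − i q₀²/2)/(z + i q₀²/2))^{1/4}, ν(∞)=1, and |q₋| = q₀ > 0, one has −2·lim_{z→∞} z·m₁₂(z) = q₋. -/
open Complex Filter Matrix

theorem stmt_11 (q₀ : ℝ) (hq₀ : 0 < q₀) (qm : ℂ) (hqm : ‖qm‖ = q₀)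
    (ν : ℂ → ℂ)
    (hν : ∀ z, ν z = ((z - I * (q₀ : ℂ) ^ 2 / 2) / (z + I * (q₀ : ℂ) ^ 2 / 2)) ^ ((1 : ℂ) / 4))
    (m : ℂ → Matrix (Fin 2) (Fin 2) ℂ)
    (hm : ∀ z, m z = (1 / 2 : ℂ) •
      !![ν z + (ν z)⁻¹, (2 / (I * (starRingEnd ℂ) qm)) * (ν z - (ν z)⁻¹);
         (I * (starRingEnd ℂ) qm / 2) * (ν z - (ν z)⁻¹), ν z + (ν z)⁻¹]) :
    Tendsto (fun z : ℂ => -2 * (z * m z 0 1)) (comap (fun w : ℂ => ‖w‖) atTop) (nhds qm) := by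
  set L := comap (fun w : ℂ => ‖w‖) atTop with hL
  set c : ℂ := I * (q₀ : ℂ) ^ 2 / 2 with hc
  have hq₀c : ((q₀ : ℂ)) ≠ 0 := by exact_mod_cast hq₀.ne'
  have hc0 : c ≠ 0 := by
    simp only [hc, div_ne_zero_iff, mul_ne_zero_iff]
    exact ⟨⟨I_ne_zero, pow_ne_zero _ hq₀c⟩, two_ne_zero⟩
  have hqm0 : qm ≠ 0 := by
    intro h; rw [h] at hqm; simp at hqm; exact hq₀.ne' hqm.symm
  have hqmc0 : (starRingEnd ℂ) qm ≠ 0 := by simpa using hqm0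
  -- |z| → ∞ along L
  have habsz : Tendsto (fun z : ℂ => ‖z‖) L atTop := tendsto_comap
  have habs : Tendsto (fun z : ℂ => ‖z + c‖) L atTop := by
    refine tendsto_atTop_mono (fun z => ?_) (tendsto_atTop_add_const_right _ (-‖c‖) habsz)
    have h := norm_sub_norm_le z (-c)
    simpa [sub_neg_eq_add, sub_eq_add_neg] using h
  have hinv : Tendsto (fun z : ℂ => (z + c)⁻¹) L (nhds 0) := by
    rw [tendsto_zero_iff_norm_tendsto_zero]
    exact habs.inv_tendsto_atTop.congr (fun z => by simp)
  have hne : ∀ᶠ z : ℂ in L, z + c ≠ 0 := by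
    filter_upwards [habs.eventually_gt_atTop 0] with z hz
    exact fun h => by simp [h] at hz
  set w : ℂ → ℂ := fun z => (z - c) / (z + c) with hw
  have hw1 : Tendsto w L (nhds 1) := by
    have h1 : Tendsto (fun z : ℂ => 1 - 2 * c * (z + c)⁻¹) L (nhds 1) := by
      have := (tendsto_const_nhds : Tendsto (fun _ : ℂ => (1 : ℂ)) L (nhds 1)).sub
        (hinv.const_mul (2 * c))
      simpa using this
    refine h1.congr' ?_
    filter_upwards [hne] with z hz
    simp only [hw]
    field_simp
    ring
  have hwne : ∀ᶠ z : ℂ in L, w z ≠ 1 := by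
    filter_upwards [hne] with z hz h
    rw [hw, div_eq_one_iff_eq hz] at h
    exact hc0 (by linear_combination (-1/2 : ℂ) * h)
  have hwt : Tendsto w L (nhdsWithin 1 {x | x ≠ 1}) :=
    tendsto_nhdsWithin_iff.mpr ⟨hw1, hwne⟩
  -- derivative of g at 1
  set g : ℂ → ℂ := fun x => x ^ ((1 : ℂ) / 4) - x ^ (-((1 : ℂ) / 4)) with hg
  have hmem : (1 : ℂ) ∈ Complex.slitPlane := by simp [Complex.mem_slitPlane_iff]
  have hgd : HasDerivAt g (1 / 2 : ℂ) 1 := by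
    have h1 := (Complex.hasStrictDerivAt_cpow_const (c := (1 : ℂ) / 4) (x := 1) hmem).hasDerivAt
    have h2 := (Complex.hasStrictDerivAt_cpow_const (c := -((1 : ℂ) / 4)) (x := 1) hmem).hasDerivAt
    have h := h1.sub h2
    simp only [Complex.one_cpow] at h
    rw [show (1 / 2 : ℂ) = 1 / 4 * 1 - -(1 / 4) * 1 by norm_num]
    exact h
  have hg1 : g 1 = 0 := by simp [hg]
  have hslope : Tendsto (fun z : ℂ => g (w z) / (w z - 1)) L (nhds (1 / 2 : ℂ)) := by
    have := (hasDerivAt_iff_tendsto_slope.mp hgd).comp hwt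
    refine this.congr fun z => ?_
    simp [slope, hg1, Function.comp, div_eq_inv_mul]
  have hzw : Tendsto (fun z : ℂ => z * (w z - 1)) L (nhds (-2 * c)) := by
    have h1 : Tendsto (fun z : ℂ => -2 * c * (1 - c * (z + c)⁻¹)) L (nhds (-2 * c)) := by
      have := (tendsto_const_nhds : Tendsto (fun _ : ℂ => (1 : ℂ)) L (nhds 1)).sub
        (hinv.const_mul c)
      have h2 := this.const_mul (-2 * c)
      simpa using h2
    refine h1.congr' ?_
    filter_upwards [hne] with z hz
    simp only [hw]
    field_simp
    ring
  have hkey : Tendsto (fun z : ℂ => z * (ν z - (ν z)⁻¹)) L (nhds (-c)) := by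
    have h := hslope.mul hzw
    have heq : (1 / 2 : ℂ) * (-2 * c) = -c := by ring
    rw [heq] at h
    refine h.congr' ?_
    filter_upwards [hne, hwne] with z hz hwz
    have hwz1 : w z - 1 ≠ 0 := sub_ne_zero.mpr hwz
    have key : g (w z) / (w z - 1) * (z * (w z - 1)) = z * g (w z) := by
      field_simp
    rw [key]
    simp only [hg, hν z, hw, ← Complex.cpow_neg]
  -- conclude
  have hlim : Tendsto (fun z : ℂ => (-2 / (I * (starRingEnd ℂ) qm)) * (z * (ν z - (ν z)⁻¹)))
      L (nhds qm) := by
    have h := hkey.const_mul (-2 / (I * (starRingEnd ℂ) qm))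
    have hval : (-2 / (I * (starRingEnd ℂ) qm)) * (-c) = qm := by
      have hsq : (q₀ : ℂ) ^ 2 = qm * (starRingEnd ℂ) qm := by
        rw [Complex.mul_conj]
        norm_cast
        rw [← hqm, Complex.sq_norm]
      rw [hc, hsq]
      field_simp
    rw [hval] at h
    exact h
  refine hlim.congr fun z => ?_
  rw [hm z]
  simp only [Matrix.smul_apply, Matrix.cons_val', Matrix.cons_val_one, Matrix.cons_val_zero,
    Matrix.empty_val', Matrix.cons_val_fin_one, Matrix.head_cons, Matrix.of_apply,
    smul_eq_mul]
  field_simp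
end

section
/- Let ρ : ℝ → ℂ be continuous with 1 − s·ρ(s)·conj(ρ(s)) > 0 and log(1 − s·ρ(s)·conj(ρ(s))) integrable on (−∞, z₋] for some real z₋. Then δ(z) = exp((1/(2πi)) ∫_{−∞}^{z₋} log(1 − s ρ(s) conj(ρ(s)))/(s − z) ds) is analytic and nonvanishing on ℂ ∖ (−∞, z₋], and δ(z) → 1 as z → ∞ with dist(z, (−∞, z₋]) ≥ 1. -/
open Complex Filter MeasureTheory Topology

theorem stmt_12 (ρ : ℝ → ℂ) (hρ : Continuous ρ) (zm : ℝ)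
    (hpos : ∀ s ≤ zm, 0 < 1 - s * ‖ρ s‖ ^ 2)
    (hint : IntegrableOn (fun s : ℝ => Real.log (1 - s * ‖ρ s‖ ^ 2)) (Set.Iic zm))
    (δ : ℂ → ℂ)
    (hδ : ∀ z, δ z = Complex.exp ((2 * Real.pi * I)⁻¹ *
      ∫ s in Set.Iic zm, (Real.log (1 - s * ‖ρ s‖ ^ 2) : ℂ) / ((s : ℂ) - z))) :
    AnalyticOn ℂ δ {z : ℂ | z.im = 0 ∧ z.re ≤ zm}ᶜ ∧
    (∀ z ∈ {z : ℂ | z.im = 0 ∧ z.re ≤ zm}ᶜ, δ z ≠ 0) ∧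
    Tendsto δ (comap (fun z : ℂ => ‖z‖) atTop ⊓
      Filter.principal {z : ℂ | 1 ≤ Metric.infDist z {w : ℂ | w.im = 0 ∧ w.re ≤ zm}})
      (nhds 1) := by
  set S : Set ℂ := {z : ℂ | z.im = 0 ∧ z.re ≤ zm} with hSdef
  set g : ℝ → ℝ := fun s => Real.log (1 - s * ‖ρ s‖ ^ 2) with hgdef
  set c : ℂ := (2 * Real.pi * I)⁻¹ with hcdef
  have hδ' : δ = fun z => Complex.exp (c * ∫ s in Set.Iic zm, (g s : ℂ) / ((s : ℂ) - z)) :=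
    funext hδ
  have hSclosed : IsClosed S :=
    (isClosed_eq continuous_im continuous_const).inter (isClosed_le continuous_re continuous_const)
  have hmem : ∀ s : ℝ, s ≤ zm → ((s : ℂ) ∈ S) := fun s hs => ⟨by simp, by simpa using hs⟩
  have hgm : Measurable g := by
    have : Measurable fun s : ℝ => 1 - s * ‖ρ s‖ ^ 2 :=
      measurable_const.sub (measurable_id.mul ((continuous_norm.comp hρ).measurable.pow_const 2))
    exact this.log
  have hdist : ∀ (z : ℂ) (s : ℝ), s ≤ zm →
      Metric.infDist z S ≤ ‖(s : ℂ) - z‖ := by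
    intro z s hs
    have h := Metric.infDist_le_dist_of_mem (x := z) (hmem s hs)
    rwa [Complex.dist_eq, norm_sub_rev] at h
  -- measurability of the integrand
  have hFmeas : ∀ z : ℂ, AEStronglyMeasurable (fun s : ℝ => (g s : ℂ) / ((s : ℂ) - z))
      (volume.restrict (Set.Iic zm)) := by
    intro z
    exact ((Complex.measurable_ofReal.comp hgm).div
      (Complex.measurable_ofReal.sub measurable_const)).aestronglyMeasurable
  -- integrability under a lower bound on the distance
  have hFint : ∀ (z : ℂ) (r : ℝ), 0 < r → (∀ s ≤ zm, r ≤ ‖(s : ℂ) - z‖) →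
      IntegrableOn (fun s : ℝ => (g s : ℂ) / ((s : ℂ) - z)) (Set.Iic zm) := by
    intro z r hr hb
    refine Integrable.mono' ((hint.norm).const_mul r⁻¹) (hFmeas z) ?_
    rw [ae_restrict_iff' measurableSet_Iic]
    filter_upwards with s hs
    have h1 : r ≤ ‖(s : ℂ) - z‖ := hb s hs
    rw [norm_div, Complex.norm_real]
    rw [div_eq_inv_mul]
    gcongr
  constructor
  · -- analyticity
    have hopen : IsOpen Sᶜ := hSclosed.isOpen_compl
    refine DifferentiableOn.analyticOn ?_ hopen
    intro z₀ hz₀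
    have hd : 0 < Metric.infDist z₀ S := by
      rw [← hSclosed.notMem_iff_infDist_pos ⟨(zm : ℂ), hmem zm le_rfl⟩]
      exact hz₀
    set d : ℝ := Metric.infDist z₀ S with hddef
    have hε : 0 < d / 2 := by positivity
    -- in the ball of radius d/2, distance to S is at least d/2
    have hball : ∀ z ∈ Metric.ball z₀ (d / 2), ∀ s ≤ zm,
        d / 2 ≤ ‖(s : ℂ) - z‖ := by
      intro z hz s hs
      have h1 : d ≤ Metric.infDist z S + dist z₀ z := Metric.infDist_le_infDist_add_dist
      have h2 : dist z₀ z < d / 2 := by rwa [Metric.mem_ball, dist_comm] at hz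
      have h3 : d / 2 ≤ Metric.infDist z S := by linarith
      exact h3.trans (hdist z s hs)
    have hderiv := hasDerivAt_integral_of_dominated_loc_of_deriv_le
      (F := fun z (s : ℝ) => (g s : ℂ) / ((s : ℂ) - z))
      (F' := fun z (s : ℝ) => (g s : ℂ) / ((s : ℂ) - z) ^ 2)
      (x₀ := z₀) (bound := fun s => (d / 2)⁻¹ ^ 2 * |g s|)
      (μ := volume.restrict (Set.Iic zm)) (Metric.ball_mem_nhds z₀ hε)
      (Filter.Eventually.of_forall fun z => hFmeas z)
      (hFint z₀ (d / 2) hε (hball z₀ (Metric.mem_ball_self hε)))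
      (((Complex.measurable_ofReal.comp hgm).div
        ((Complex.measurable_ofReal.sub measurable_const).pow_const 2)).aestronglyMeasurable)
      ?_ ((hint.norm).const_mul _) ?_
    · have hΦ := hderiv.2
      rw [hδ']
      exact (((hΦ.differentiableAt).const_mul c).cexp).differentiableWithinAt
    · -- bound on the derivative
      rw [ae_restrict_iff' measurableSet_Iic]
      filter_upwards with s hs
      intro z hz
      have h1 : d / 2 ≤ ‖(s : ℂ) - z‖ := hball z hz s hs
      rw [norm_div, Complex.norm_real, norm_pow, Real.norm_eq_abs]
      rw [div_eq_inv_mul, ← inv_pow]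
      gcongr
    · -- differentiability of the integrand
      rw [ae_restrict_iff' measurableSet_Iic]
      filter_upwards with s hs
      intro z hz
      have hne : ((s : ℂ) - z) ≠ 0 := by
        intro h
        have := hball z hz s hs
        rw [h] at this
        simp at this
        linarith
      have h1 : HasDerivAt (fun z : ℂ => (s : ℂ) - z) (-1) z := by
        simpa using (hasDerivAt_id z).const_sub ((s : ℂ))
      have h2 := ((hasDerivAt_const z ((g s : ℂ))).div h1 hne)
      exact h2.congr_deriv (by ring)
  refine ⟨fun z _ => by rw [hδ]; exact Complex.exp_ne_zero _, ?_⟩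
  -- tendsto part
  set l : Filter ℂ := comap (fun z : ℂ => ‖z‖) atTop ⊓
      Filter.principal {z : ℂ | 1 ≤ Metric.infDist z S} with hldef
  have hmemS : ∀ᶠ z in l, 1 ≤ Metric.infDist z S := by
    have : {z : ℂ | 1 ≤ Metric.infDist z S} ∈ l :=
      Filter.mem_inf_of_right (Filter.mem_principal_self _)
    exact this
  have habs : Tendsto (fun z : ℂ => ‖z‖) l atTop :=
    (tendsto_comap).mono_left inf_le_left
  have hΦ0 : Tendsto (fun z : ℂ => ∫ s in Set.Iic zm, (g s : ℂ) / ((s : ℂ) - z)) l (𝓝 0) := by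
    have h0 : (0 : ℂ) = ∫ s in Set.Iic zm, (0 : ℂ) := by simp
    rw [h0]
    refine MeasureTheory.tendsto_integral_filter_of_dominated_convergence
      (bound := fun s => |g s|) (Filter.Eventually.of_forall fun z => hFmeas z) ?_ hint.norm ?_
    · filter_upwards [hmemS] with z hz
      rw [ae_restrict_iff' measurableSet_Iic]
      filter_upwards with s hs
      have h1 : 1 ≤ ‖(s : ℂ) - z‖ := hz.trans (hdist z s hs)
      rw [norm_div, Complex.norm_real]
      calc |g s| / ‖(s : ℂ) - z‖ ≤ |g s| / 1 := by gcongr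
        _ = |g s| := by rw [div_one]
    · rw [ae_restrict_iff' measurableSet_Iic]
      filter_upwards with s hs
      rw [tendsto_zero_iff_norm_tendsto_zero]
      have hlow : ∀ z : ℂ, ‖z‖ - ‖(s : ℂ)‖ ≤ ‖(s : ℂ) - z‖ := by
        intro z
        rw [norm_sub_rev]
        simpa using norm_sub_norm_le z ((s : ℂ))
      have hatTop : Tendsto (fun z : ℂ => ‖(s : ℂ) - z‖) l atTop := by
        refine tendsto_atTop_mono hlow ?_
        exact tendsto_atTop_add_const_right _ _ habs
      have hinv : Tendsto (fun z : ℂ => (‖(s : ℂ) - z‖)⁻¹) l (𝓝 0) :=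
        hatTop.inv_tendsto_atTop
      have := hinv.const_mul |g s|
      rw [mul_zero] at this
      refine this.congr fun z => ?_
      rw [norm_div, Complex.norm_real, div_eq_mul_inv]
      rfl
  rw [hδ']
  have h1 : Tendsto (fun z : ℂ => c * ∫ s in Set.Iic zm, (g s : ℂ) / ((s : ℂ) - z)) l (𝓝 0) := by
    have := hΦ0.const_mul c
    rwa [mul_zero] at this
  have := h1.cexp
  rwa [Complex.exp_zero] at this
end

section
/- Define F : [0, √2/2] × [0, √2] → ℝ via the contour integral 𝓕(x,y) = ∫_{−1}^{1} √(((iτ + y)² + 2y² − 4xy + 1)/(1 − τ²)) · (iτ + 2x − y) dτ (with the branch chosen so the integrand is real; equivalently the real part of the stated integral). Then 𝓕(0,0) = 0 and 𝓕(√2/2, √2/2) = 0. -/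
open Complex MeasureTheory

lemma aux_bound (g : ℝ → ℝ) (C : ℝ) (hC0 : 0 ≤ C) (τ : ℝ)
    (hgC : |g τ| ≤ C) (hτ : τ ∈ Set.Icc (-1:ℝ) 1) :
    |g τ / Real.sqrt (1-τ^2)| ≤
      C * ((1-τ) ^ (-(1/2) : ℝ) + (1+τ) ^ (-(1/2) : ℝ)) := by
  obtain ⟨h1, h2⟩ := hτ
  have ht1 : (0:ℝ) ≤ 1 - τ := by linarith
  have ht2 : (0:ℝ) ≤ 1 + τ := by linarith
  have e1 : (1-τ) ^ (-(1/2) : ℝ) = (Real.sqrt (1-τ))⁻¹ := by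
    rw [Real.rpow_neg ht1, Real.sqrt_eq_rpow]
  have e2 : (1+τ) ^ (-(1/2) : ℝ) = (Real.sqrt (1+τ))⁻¹ := by
    rw [Real.rpow_neg ht2, Real.sqrt_eq_rpow]
  have hn1 : (0:ℝ) ≤ (1-τ) ^ (-(1/2) : ℝ) := Real.rpow_nonneg ht1 _
  have hn2 : (0:ℝ) ≤ (1+τ) ^ (-(1/2) : ℝ) := Real.rpow_nonneg ht2 _
  rcases eq_or_lt_of_le h2 with he | h2'
  · rw [show (1:ℝ) - τ^2 = 0 by rw [he]; norm_num, Real.sqrt_zero, div_zero,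
      abs_zero]
    positivity
  rcases eq_or_lt_of_le h1 with he | h1'
  · rw [show (1:ℝ) - τ^2 = 0 by rw [← he]; norm_num, Real.sqrt_zero, div_zero,
      abs_zero]
    positivity
  have hpos : (0:ℝ) < 1 - τ^2 := by nlinarith
  have hs : (0:ℝ) < Real.sqrt (1-τ^2) := Real.sqrt_pos.2 hpos
  have hmain : |g τ / Real.sqrt (1-τ^2)| ≤ C / Real.sqrt (1-τ^2) := by
    rw [abs_div, abs_of_pos hs]
    gcongr
  by_cases hτ0 : 0 ≤ τ
  · have hsq : Real.sqrt (1-τ) ≤ Real.sqrt (1-τ^2) :=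
      Real.sqrt_le_sqrt (by nlinarith)
    have hsp : (0:ℝ) < Real.sqrt (1-τ) := Real.sqrt_pos.2 (by linarith)
    have h3 : C / Real.sqrt (1-τ^2) ≤ C / Real.sqrt (1-τ) := by gcongr
    calc |g τ / Real.sqrt (1-τ^2)| ≤ C / Real.sqrt (1-τ) := hmain.trans h3
      _ = C * (1-τ) ^ (-(1/2) : ℝ) := by rw [e1, div_eq_mul_inv]
      _ ≤ _ := by nlinarith
  · have hsq : Real.sqrt (1+τ) ≤ Real.sqrt (1-τ^2) :=
      Real.sqrt_le_sqrt (by nlinarith)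
    have hsp : (0:ℝ) < Real.sqrt (1+τ) := Real.sqrt_pos.2 (by linarith)
    have h3 : C / Real.sqrt (1-τ^2) ≤ C / Real.sqrt (1+τ) := by gcongr
    calc |g τ / Real.sqrt (1-τ^2)| ≤ C / Real.sqrt (1+τ) := hmain.trans h3
      _ = C * (1+τ) ^ (-(1/2) : ℝ) := by rw [e2, div_eq_mul_inv]
      _ ≤ _ := by nlinarith

lemma aux_majorant :
    IntervalIntegrable
      (fun τ : ℝ => (1-τ) ^ (-(1/2) : ℝ) + (1+τ) ^ (-(1/2) : ℝ)) volume (-1) 1 := by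
  have hg1 : IntervalIntegrable (fun τ : ℝ => (1-τ) ^ (-(1/2) : ℝ)) volume (-1) 1 := by
    have := ((intervalIntegral.intervalIntegrable_rpow' (a := 0) (b := 2)
      (r := -(1/2)) (by norm_num)).comp_sub_left 1).symm
    norm_num at this
    exact this
  have hg2 : IntervalIntegrable (fun τ : ℝ => (1+τ) ^ (-(1/2) : ℝ)) volume (-1) 1 := by
    have := (intervalIntegral.intervalIntegrable_rpow' (a := 0) (b := 2)
      (r := -(1/2)) (by norm_num)).comp_add_left 1
    norm_num at this
    exact this
  exact hg1.add hg2

lemma aux_integrable (g : ℝ → ℝ) (hg : Measurable g) (C : ℝ)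
    (hC : ∀ τ ∈ Set.Icc (-1:ℝ) 1, |g τ| ≤ C) :
    IntervalIntegrable (fun τ : ℝ => g τ / Real.sqrt (1-τ^2)) volume (-1) 1 := by
  have hC0 : (0:ℝ) ≤ C := le_trans (abs_nonneg _) (hC 0 (by norm_num))
  have hmeas : AEStronglyMeasurable (fun τ : ℝ => g τ / Real.sqrt (1-τ^2))
      (volume.restrict (Set.uIoc (-1:ℝ) 1)) := by
    apply Measurable.aestronglyMeasurable
    exact hg.div ((measurable_const.sub (measurable_id.pow_const 2)).sqrt)
  refine (aux_majorant.const_mul C).mono_fun hmeas ?_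
  filter_upwards [MeasureTheory.ae_restrict_mem measurableSet_Ioc] with τ hτ
  rw [Set.uIoc_of_le (by norm_num : (-1:ℝ) ≤ 1)] at hτ
  have hτ' : τ ∈ Set.Icc (-1:ℝ) 1 := ⟨hτ.1.le, hτ.2⟩
  have h := aux_bound g C hC0 τ (hC τ hτ') hτ'
  have hn1 : (0:ℝ) ≤ (1-τ) ^ (-(1/2) : ℝ) :=
    Real.rpow_nonneg (by linarith [hτ'.2]) _
  have hn2 : (0:ℝ) ≤ (1+τ) ^ (-(1/2) : ℝ) :=
    Real.rpow_nonneg (by linarith [hτ'.1]) _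
  calc ‖g τ / Real.sqrt (1-τ^2)‖ = |g τ / Real.sqrt (1-τ^2)| := rfl
    _ ≤ C * ((1-τ) ^ (-(1/2) : ℝ) + (1+τ) ^ (-(1/2) : ℝ)) := h
    _ ≤ ‖C * ((1-τ) ^ (-(1/2) : ℝ) + (1+τ) ^ (-(1/2) : ℝ))‖ := le_abs_self _

lemma aux_integrable' :
    IntervalIntegrable (fun τ : ℝ => (1/2 - τ^2) / Real.sqrt (1-τ^2)) volume (-1) 1 := by
  apply aux_integrable _ (by fun_prop) 1
  intro τ hτ
  obtain ⟨h1, h2⟩ := hτ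
  rw [abs_le]
  constructor <;> nlinarith

lemma aux_ftc :
    ∫ τ in (-1:ℝ)..1, (1/2 - τ^2)/Real.sqrt (1-τ^2) = 0 := by
  have key := intervalIntegral.integral_eq_sub_of_hasDeriv_right_of_le
    (f := fun τ : ℝ => τ * Real.sqrt (1-τ^2) / 2)
    (f' := fun τ : ℝ => (1/2 - τ^2)/Real.sqrt (1-τ^2))
    (by norm_num : (-1:ℝ) ≤ 1) ?_ ?_ aux_integrable'
  · rw [key]; norm_num
  · fun_prop
  · intro x hx
    obtain ⟨h1, h2⟩ := hx
    have hpos : (0:ℝ) < 1 - x^2 := by nlinarith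
    have hs : (0:ℝ) < Real.sqrt (1-x^2) := Real.sqrt_pos.2 hpos
    have hd1 : HasDerivAt (fun τ : ℝ => 1 - τ^2) (-(2*x)) x := by
      simpa using ((hasDerivAt_pow 2 x).const_sub 1)
    have hd2 := hd1.sqrt (ne_of_gt hpos)
    have hd3 := ((hasDerivAt_id x).mul hd2).div_const 2
    simp only [id_eq] at hd3
    have heq : (1 * Real.sqrt (1-x^2) + x * (-(2*x) / (2 * Real.sqrt (1-x^2)))) / 2
        = (1/2 - x^2)/Real.sqrt (1-x^2) := by
      have hsq : Real.sqrt (1-x^2) ^ 2 = 1 - x^2 := Real.sq_sqrt hpos.le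
      field_simp
      nlinarith [hsq]
    rw [heq] at hd3
    exact hd3.hasDerivWithinAt

theorem stmt_14 (F : ℝ → ℝ → ℝ)
    (hF : ∀ x y, F x y = (∫ τ in Set.Ioo (-1 : ℝ) 1,
      (((I * (τ : ℂ) + (y : ℂ)) ^ 2 + 2 * (y : ℂ) ^ 2 - 4 * (x : ℂ) * (y : ℂ) + 1) /
          (1 - (τ : ℂ) ^ 2)) ^ ((1 : ℂ) / 2) * (I * (τ : ℂ) + 2 * (x : ℂ) - (y : ℂ))).re) :
    F 0 0 = 0 ∧ F (Real.sqrt 2 / 2) (Real.sqrt 2 / 2) = 0 := by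
  constructor
  · rw [hF]
    have hcongr : ∀ τ ∈ Set.Ioo (-1:ℝ) 1,
        (((I * (τ : ℂ) + ((0:ℝ) : ℂ)) ^ 2 + 2 * ((0:ℝ) : ℂ) ^ 2 -
            4 * ((0:ℝ) : ℂ) * ((0:ℝ) : ℂ) + 1) /
          (1 - (τ : ℂ) ^ 2)) ^ ((1 : ℂ) / 2) * (I * (τ : ℂ) + 2 * ((0:ℝ) : ℂ) - ((0:ℝ) : ℂ))
        = I * (τ : ℂ) := by
      intro τ hτ
      obtain ⟨h1, h2⟩ := hτ
      have hpos : (0:ℝ) < 1 - τ^2 := by nlinarith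
      have hne : (1 - (τ:ℂ)^2) ≠ 0 := by
        intro h
        have h0 : ((1 - τ^2 : ℝ) : ℂ) = 0 := by push_cast; linear_combination h
        exact absurd (Complex.ofReal_eq_zero.1 h0) (ne_of_gt hpos)
      have hnum : (I * (τ : ℂ) + ((0:ℝ) : ℂ)) ^ 2 + 2 * ((0:ℝ) : ℂ) ^ 2 -
          4 * ((0:ℝ) : ℂ) * ((0:ℝ) : ℂ) + 1 = 1 - (τ:ℂ)^2 := by
        simp only [Complex.ofReal_zero]
        linear_combination (τ:ℂ)^2 * Complex.I_sq
      rw [hnum, div_self hne, Complex.one_cpow, one_mul]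
      simp only [Complex.ofReal_zero]
      ring
    rw [MeasureTheory.setIntegral_congr_fun measurableSet_Ioo hcongr]
    have h1 : ∫ τ in Set.Ioo (-1:ℝ) 1, I * (τ : ℂ)
        = I * ∫ τ in Set.Ioo (-1:ℝ) 1, (τ : ℂ) := MeasureTheory.integral_const_mul _ _
    have h2 : ∫ τ in Set.Ioo (-1:ℝ) 1, (τ : ℂ)
        = ((∫ τ in Set.Ioo (-1:ℝ) 1, τ : ℝ) : ℂ) := integral_ofReal
    have h3 : (∫ τ in Set.Ioo (-1:ℝ) 1, τ : ℝ) = 0 := by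
      rw [← MeasureTheory.integral_Ioc_eq_integral_Ioo,
        ← intervalIntegral.integral_of_le (by norm_num : (-1:ℝ) ≤ 1)]
      simp [integral_id]
    rw [h1, h2, h3]
    simp
  · rw [hF]
    set y : ℝ := Real.sqrt 2 / 2 with hy
    have hy0 : (0:ℝ) < y := by rw [hy]; positivity
    have hy2 : y^2 = 1/2 := by
      rw [hy, div_pow, Real.sq_sqrt (by norm_num : (0:ℝ) ≤ 2)]
      norm_num
    have h2y : Real.sqrt 2 = 2 * y := by rw [hy]; ring
    have key : ∀ τ ∈ Set.Ioo (-1:ℝ) 1,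
        (((I * (τ : ℂ) + (y : ℂ)) ^ 2 + 2 * (y : ℂ) ^ 2 - 4 * (y : ℂ) * (y : ℂ) + 1) /
          (1 - (τ : ℂ) ^ 2)) ^ ((1 : ℂ) / 2) * (I * (τ : ℂ) + 2 * (y : ℂ) - (y : ℂ))
        = (((1/2 - τ^2)/Real.sqrt (1-τ^2) : ℝ) : ℂ)
          + (((Real.sqrt 2 * τ)/Real.sqrt (1-τ^2) : ℝ) : ℂ) * I := by
      intro τ hτ
      obtain ⟨h1, h2⟩ := hτ
      have hpos : (0:ℝ) < 1 - τ^2 := by nlinarith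
      have hs : (0:ℝ) < Real.sqrt (1-τ^2) := Real.sqrt_pos.2 hpos
      set s : ℝ := Real.sqrt (1-τ^2) with hsdef
      have hsq : s^2 = 1 - τ^2 := Real.sq_sqrt hpos.le
      set w : ℂ := I * (τ:ℂ) + (y:ℂ) with hw
      have hyC : ((y:ℝ):ℂ)^2 = 1/2 := by
        rw [← Complex.ofReal_pow, hy2]; norm_num
      have hnum : w ^ 2 + 2 * (y : ℂ) ^ 2 - 4 * (y : ℂ) * (y : ℂ) + 1 = w ^ 2 := by
        have h0 : 2 * ((y:ℝ):ℂ) ^ 2 - 4 * (y:ℂ) * (y:ℂ) + 1 = 0 := by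
          rw [show (4:ℂ) * (y:ℂ) * (y:ℂ) = 4 * ((y:ℝ):ℂ)^2 by ring, hyC]
          norm_num
        linear_combination h0
      have hden : (1 - (τ:ℂ)^2) = ((s:ℝ):ℂ)^2 := by
        have h0 := congrArg (fun r : ℝ => (r : ℂ)) hsq
        push_cast at h0
        linear_combination - h0
      have hwre : w.re = y := by simp [hw]
      have hcpow : ((w ^ 2) / (1 - (τ:ℂ)^2)) ^ ((1:ℂ)/2) = w / ((s:ℝ):ℂ) := by
        rw [hden, ← div_pow, one_div]
        apply Complex.sq_cpow_two_inv
        rw [Complex.div_ofReal_re, hwre]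
        exact div_pos hy0 hs
      have hfac : I * (τ:ℂ) + 2 * (y:ℂ) - (y:ℂ) = w := by rw [hw]; ring
      rw [hnum, hcpow, hfac]
      have hw2 : w ^ 2 = (((1/2 - τ^2 : ℝ)) : ℂ) + (((Real.sqrt 2 * τ : ℝ)) : ℂ) * I := by
        rw [hw]
        have hy2' : ((y:ℝ):ℂ) * ((y:ℝ):ℂ) = 1/2 := by
          rw [← sq]; exact hyC
        have h2y' : ((Real.sqrt 2 : ℝ) : ℂ) = 2 * ((y:ℝ):ℂ) := by
          exact_mod_cast congrArg (fun r : ℝ => (r:ℂ)) h2y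
        push_cast
        rw [h2y']
        linear_combination (τ:ℂ)^2 * Complex.I_sq + hy2'
      rw [div_mul_eq_mul_div, ← sq, hw2]
      have hsne : ((s:ℝ):ℂ) ≠ 0 := by
        exact_mod_cast ne_of_gt hs
      field_simp
      push_cast
      field_simp
    rw [MeasureTheory.setIntegral_congr_fun measurableSet_Ioo key]
    have hre_int : IntegrableOn (fun τ : ℝ => (1/2 - τ^2)/Real.sqrt (1-τ^2))
        (Set.Ioo (-1:ℝ) 1) volume := by
      have := aux_integrable'
      rw [intervalIntegrable_iff, Set.uIoc_of_le (by norm_num : (-1:ℝ) ≤ 1)] at this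
      exact this.mono_set Set.Ioo_subset_Ioc_self
    have him_int : IntegrableOn (fun τ : ℝ => (Real.sqrt 2 * τ)/Real.sqrt (1-τ^2))
        (Set.Ioo (-1:ℝ) 1) volume := by
      have h := aux_integrable (fun τ => Real.sqrt 2 * τ) (by fun_prop) 2 ?_
      · rw [intervalIntegrable_iff, Set.uIoc_of_le (by norm_num : (-1:ℝ) ≤ 1)] at h
        exact h.mono_set Set.Ioo_subset_Ioc_self
      · intro τ hτ
        obtain ⟨ha, hb⟩ := hτ
        rw [abs_mul, _root_.abs_of_nonneg (Real.sqrt_nonneg 2)]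
        have h2 : Real.sqrt 2 ≤ 2 := by
          nlinarith [Real.sq_sqrt (show (0:ℝ) ≤ 2 by norm_num), Real.sqrt_nonneg 2]
        have hτ1 : |τ| ≤ 1 := abs_le.2 ⟨ha, hb⟩
        nlinarith [Real.sqrt_nonneg 2, abs_nonneg τ]
    have hint : Integrable (fun τ : ℝ => (((1/2 - τ^2)/Real.sqrt (1-τ^2) : ℝ) : ℂ)
          + (((Real.sqrt 2 * τ)/Real.sqrt (1-τ^2) : ℝ) : ℂ) * I)
        (volume.restrict (Set.Ioo (-1:ℝ) 1)) := by
      rw [← MeasureTheory.Integrable.re_im_iff]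
      constructor
      · refine hre_int.congr (Filter.Eventually.of_forall fun x => ?_)
        simp [RCLike.re_to_complex, ← Complex.ofReal_pow]
      · refine him_int.congr (Filter.Eventually.of_forall fun x => ?_)
        simp [RCLike.im_to_complex, ← Complex.ofReal_pow]
    have hre := integral_re hint
    simp only [RCLike.re_to_complex] at hre
    rw [← hre]
    have : ∀ τ : ℝ, ((((1/2 - τ^2)/Real.sqrt (1-τ^2) : ℝ) : ℂ)
        + (((Real.sqrt 2 * τ)/Real.sqrt (1-τ^2) : ℝ) : ℂ) * I).re
        = (1/2 - τ^2)/Real.sqrt (1-τ^2) := by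
      intro τ; simp [← Complex.ofReal_pow]
    simp only [this]
    rw [← MeasureTheory.integral_Ioc_eq_integral_Ioo,
      ← intervalIntegral.integral_of_le (by norm_num : (-1:ℝ) ≤ 1)]
    exact aux_ftc
end
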